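/- Fix k ≥ 1. Let d_k : {0,1,2}* → {0,1,2}* be the morphism with d_k(i) = i^{k+1} for each i ∈ {0,1,2}, and let g : {0,1,2}* → {0,1,2,a,b}* be the morphism with g(i) = i·a·b for each i ∈ {0,1,2}, where a and b are two new letters. If the formula with reversal φ_{3k} occurs in g(d_k(w)) for a word w ∈ {0,1,2}*, then w contains a square; equivalently, if w is square-free then g(d_k(w)) avoids φ_{3k}. -/

import Mathlib

/-- A word `w` *encounters* the formula with reversal
`φ_k = x y₁ ⋯ y_k x · ȳ₁ · ⋯ · ȳ_k` if there are nonempty words `X, Y₁, …, Y_k`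
such that `X Y₁ ⋯ Y_k X` is a factor of `w` and each reversed `Yᵢ` is a factor of `w`. -/
def Encounters {A : Type*} (k : ℕ) (w : List A) : Prop :=
  ∃ (X : List A) (Ys : List (List A)),
    Ys.length = k ∧ X ≠ [] ∧ (∀ Y ∈ Ys, Y ≠ []) ∧
    (X ++ Ys.flatten ++ X) <:+: w ∧ (∀ Y ∈ Ys, Y.reverse <:+: w)

/-- A word avoids the formula with reversal `φ_k`. -/
def Avoids {A : Type*} (k : ℕ) (w : List A) : Prop := ¬ Encounters k w

/-- A word is square-free if it has no factor `u ++ u` with `u` nonempty. -/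
def SquareFree {A : Type*} (w : List A) : Prop :=
  ∀ u : List A, u ≠ [] → ¬ (u ++ u) <:+: w

/-- Auxiliary function building the `m`-cyclic `w`-word starting at block index `i`. -/
def cyclicWordFrom {A : Type*} (m : ℕ) (a : ℕ → A) : ℕ → List ℕ → List A
  | _, [] => []
  | i, x :: xs => List.replicate x (a (i % m)) ++ cyclicWordFrom m a (i + 1) xs

/-- The `m`-cyclic `w`-word `C_m(w)` on letters `a 0, …, a (m-1)`:
`(a 0)^{w₁} (a 1)^{w₂} ⋯ (a (m-1))^{w_m} (a 0)^{w_{m+1}} ⋯`. -/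
def cyclicWord {A : Type*} (m : ℕ) (a : ℕ → A) (w : List ℕ) : List A :=
  cyclicWordFrom m a 0 w

/-- `w` (a word over `{1,…,k+1}`) contains a forbidden `(k,m)`-factor:
a factor `x' α₁ ⋯ α_j x''` with `1 ≤ j ≤ k`, each `αᵢ` a letter of `{1,…,k+1}`,
`α₁+⋯+α_j ≥ k`, `|x'| = |x''| = n ≡ m - j (mod m)`, `x'₁ ≥ x''₁`, `x'ₙ ≤ x''ₙ`, and
`x'ᵢ = x''ᵢ` for `i ∈ {2,…,n-1}` (1-indexed). -/
def ForbiddenFactor (k m : ℕ) (w : List ℕ) : Prop :=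
  ∃ x' α x'' : List ℕ,
    (x' ++ α ++ x'') <:+: w ∧
    1 ≤ α.length ∧ α.length ≤ k ∧
    (∀ c ∈ α, 1 ≤ c ∧ c ≤ k + 1) ∧
    k ≤ α.sum ∧
    x'.length = x''.length ∧
    x'.length % m = (m - α.length) % m ∧
    x''.getD 0 0 ≤ x'.getD 0 0 ∧
    x'.getD (x'.length - 1) 0 ≤ x''.getD (x''.length - 1) 0 ∧
    ∀ i, 0 < i → i < x'.length - 1 → x'.getD i 0 = x''.getD i 0

/-- The 8-uniform morphism `f` with `f(0)=11112122`, `f(1)=12112222`, `f(2)=21111222`. -/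
def fMorph (v : List ℕ) : List ℕ :=
  v.flatMap fun c =>
    if c = 0 then [1,1,1,1,2,1,2,2]
    else if c = 1 then [1,2,1,1,2,2,2,2]
    else [2,1,1,1,1,2,2,2]

/-- Image of a letter under the morphism `ρ` with `ρ(1)=22`, `ρ(2)=21`. -/
def rhoLetter (c : ℕ) : List ℕ := if c = 1 then [2,2] else [2,1]

/-- The morphism `ρ : {1,2}* → {1,2}*` with `ρ(1)=22`, `ρ(2)=21`. -/
def rhoWord (v : List ℕ) : List ℕ := v.flatMap rhoLetter

/-- The morphism `d_k` with `d_k(i) = i^{k+1}` for `i ∈ {0,1,2}`. -/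
def dMorph (k : ℕ) (w : List ℕ) : List ℕ := w.flatMap fun i => List.replicate (k + 1) i

/-- The morphism `g` with `g(i) = i·a·b`, where the letters `a, b` are coded `3, 4`. -/
def gMorph (w : List ℕ) : List ℕ := w.flatMap fun i => [i, 3, 4]

/-- The morphism `g'` with `g'(i) = i·a·b·c·d`, where `a,b,c,d` are coded `3,4,5,6`. -/
def g'Morph (w : List ℕ) : List ℕ := w.flatMap fun i => [i, 3, 4, 5, 6]

/-- Insert the letter `c` after every `t` letters of `l`. -/
def insertEvery {A : Type*} (c : A) (t : ℕ) (l : List A) : List A :=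
  if _h : l.length ≤ t ∨ t = 0 then l
  else l.take t ++ c :: insertEvery c t (l.drop t)
termination_by l.length
decreasing_by
  simp only [List.length_drop]
  omega

/-- `φ_k` is `n`-avoidable: infinitely many finite words over an `n`-letter alphabet avoid it. -/
def IsNAvoidable (k n : ℕ) : Prop := {w : List (Fin n) | Avoids k w}.Infinite


section Aux

/-! ### Auxiliary lemmas -/

private lemma infix_getD {A : Type*} (d : A) {l u : List A} (h : l <:+: u) :
    ∃ p, p + l.length ≤ u.length ∧ ∀ i < l.length, l.getD i d = u.getD (p + i) d := by
  obtain ⟨s, t, rfl⟩ := h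
  refine ⟨s.length, by simp only [List.length_append]; omega, fun i hi => ?_⟩
  rw [List.append_assoc, List.getD_append_right _ _ _ _ (by omega),
    Nat.add_sub_cancel_left, List.getD_append _ _ _ _ hi]

private lemma mem_infix_flatten {A : Type*} {Y : List A} {Ys : List (List A)} (h : Y ∈ Ys) :
    Y <:+: Ys.flatten := by
  induction Ys with
  | nil => simp at h
  | cons Z Ys ih =>
    rw [List.flatten_cons]
    rcases List.mem_cons.mp h with rfl | h
    · exact (List.prefix_append Y Ys.flatten).isInfix
    · exact (ih h).trans (List.suffix_append Z Ys.flatten).isInfix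

private lemma flatten_len_ones {A : Type*} (Ys : List (List A)) (h : ∀ Y ∈ Ys, Y.length = 1) :
    Ys.flatten.length = Ys.length := by
  induction Ys with
  | nil => rfl
  | cons Z Ys ih =>
    rw [List.flatten_cons, List.length_append, List.length_cons,
      ih (fun Y hY => h Y (List.mem_cons_of_mem _ hY)), h Z List.mem_cons_self]
    omega

private lemma length_gMorph (v : List ℕ) : (gMorph v).length = 3 * v.length := by
  induction v with
  | nil => rfl
  | cons c v ih =>
    simp only [gMorph, List.flatMap_cons, List.length_append, List.length_cons,
      List.length_nil] at ih ⊢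
    omega

private lemma getD_gMorph (v : List ℕ) (n : ℕ) (hn : n < 3 * v.length) :
    (gMorph v).getD n 0 =
      if n % 3 = 0 then v.getD (n / 3) 0 else if n % 3 = 1 then 3 else 4 := by
  induction v generalizing n with
  | nil => simp at hn
  | cons c v ih =>
    have hcons : gMorph (c :: v) = c :: 3 :: 4 :: gMorph v := rfl
    rw [hcons]
    match n with
    | 0 => simp
    | 1 => simp
    | 2 => simp
    | (n + 3) =>
      simp only [List.getD_cons_succ]
      rw [ih n (by simp only [List.length_cons] at hn; omega)]
      rw [show (n + 3) % 3 = n % 3 by omega, show (n + 3) / 3 = n / 3 + 1 by omega]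
      simp only [List.getD_cons_succ]

private lemma length_dMorph (k : ℕ) (w : List ℕ) : (dMorph k w).length = (k + 1) * w.length := by
  induction w with
  | nil => simp [dMorph]
  | cons c w ih =>
    simp only [dMorph, List.flatMap_cons, List.length_append, List.length_replicate,
      List.length_cons] at ih ⊢
    rw [ih, Nat.mul_add, Nat.mul_one]
    omega

private lemma getD_replicate' (m n c : ℕ) (h : n < m) : (List.replicate m c).getD n 0 = c := by
  rw [List.getD_eq_getElem _ _ (by simpa using h)]
  simp

private lemma getD_dMorph (k : ℕ) (w : List ℕ) (n : ℕ) (hn : n < (k + 1) * w.length) :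
    (dMorph k w).getD n 0 = w.getD (n / (k + 1)) 0 := by
  induction w generalizing n with
  | nil => simp at hn
  | cons c w ih =>
    have hcons : dMorph k (c :: w) = List.replicate (k + 1) c ++ dMorph k w := by
      simp [dMorph]
    rw [hcons]
    by_cases h : n < k + 1
    · rw [List.getD_append _ _ _ _ (by simpa using h), getD_replicate' _ _ _ h,
        Nat.div_eq_of_lt h]
      rfl
    · have hge : k + 1 ≤ n := Nat.not_lt.mp h
      have hmul : (k + 1) * (w.length + 1) = (k + 1) * w.length + (k + 1) := by ring
      simp only [List.length_cons] at hn
      rw [List.getD_append_right _ _ _ _ (by simpa using hge),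
        List.length_replicate,
        ih (n - (k + 1)) (by omega),
        Nat.div_eq_sub_div (by omega) hge]
      simp only [List.getD_cons_succ]

private lemma le_two_getD_dMorph (k : ℕ) (w : List ℕ) (hw : ∀ c ∈ w, c ≤ 2) (n : ℕ) :
    (dMorph k w).getD n 0 ≤ 2 := by
  simp only [dMorph]
  by_cases h : n < (w.flatMap fun i => List.replicate (k + 1) i).length
  · rw [List.getD_eq_getElem _ _ h]
    have hm := List.getElem_mem h
    rw [List.mem_flatMap] at hm
    obtain ⟨i, hi, hmem⟩ := hm
    rw [List.eq_of_mem_replicate hmem]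
    exact hw i hi
  · rw [List.getD_eq_default _ _ (by omega)]
    omega

private lemma pair_classify (k : ℕ) (w : List ℕ) (hw : ∀ c ∈ w, c ≤ 2) (a b : ℕ)
    (h : [a, b] <:+: gMorph (dMorph k w)) :
    (a ≤ 2 ∧ b = 3) ∨ (a = 3 ∧ b = 4) ∨ (a = 4 ∧ b ≤ 2) := by
  obtain ⟨p, hp, hget⟩ := infix_getD 0 h
  simp only [List.length_cons, List.length_nil, length_gMorph] at hp
  have ha : a = (gMorph (dMorph k w)).getD p 0 := by
    have := hget 0 (by norm_num)
    simpa using this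
  have hb : b = (gMorph (dMorph k w)).getD (p + 1) 0 := by
    have := hget 1 (by norm_num)
    simpa using this
  rw [getD_gMorph _ _ (by omega)] at ha
  rw [getD_gMorph _ _ (by omega)] at hb
  have hv1 := le_two_getD_dMorph k w hw (p / 3)
  have hv2 := le_two_getD_dMorph k w hw ((p + 1) / 3)
  split_ifs at ha hb <;> omega

private lemma succ_div_of_mod_eq (k n : ℕ) (h : (n + 1) % (k + 1) = 0) :
    (n + 1) / (k + 1) = n / (k + 1) + 1 := by
  rw [Nat.succ_div, if_pos (Nat.dvd_of_mod_eq_zero h)]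

private lemma succ_div_of_mod_ne (k n : ℕ) (h : (n + 1) % (k + 1) ≠ 0) :
    (n + 1) / (k + 1) = n / (k + 1) := by
  rw [Nat.succ_div, if_neg (fun hd => h (Nat.mod_eq_zero_of_dvd hd))]
  omega

private lemma mul_add_div_lt (K a r : ℕ) (hK : 0 < K) (hr : r < K) : (K * a + r) / K = a := by
  rw [Nat.mul_add_div hK, Nat.div_eq_of_lt hr, Nat.add_zero]

private lemma div_const_of_no_bound (k s m : ℕ)
    (h : ∀ j, j + 1 < m → (s + j + 1) % (k + 1) ≠ 0) :
    ∀ j < m, (s + j) / (k + 1) = s / (k + 1) := by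
  intro j
  induction j with
  | zero => intro _; rfl
  | succ j ih =>
    intro hj
    rw [show s + (j + 1) = s + j + 1 by omega, succ_div_of_mod_ne k (s + j) (h j hj)]
    exact ih (by omega)

private lemma square_of_getD (w : List ℕ) (b len : ℕ) (hlen : 1 ≤ len)
    (hb : b + 2 * len ≤ w.length)
    (h : ∀ t < len, w.getD (b + t) 0 = w.getD (b + len + t) 0) :
    ∃ u : List ℕ, u ≠ [] ∧ (u ++ u) <:+: w := by
  refine ⟨(w.drop b).take len, ?_, ?_⟩
  · have hl : ((w.drop b).take len).length = len := by
      simp only [List.length_take, List.length_drop]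
      omega
    intro hc
    rw [hc] at hl
    simp at hl
    omega
  · have e3 : (w.drop (b + len)).take len = (w.drop b).take len := by
      apply List.ext_getElem
      · simp only [List.length_take, List.length_drop]
        omega
      · intro n h1 h2
        rw [List.getElem_take, List.getElem_drop, List.getElem_take, List.getElem_drop]
        have hn : n < len := by
          simp only [List.length_take, List.length_drop] at h1
          omega
        have hh := (h n hn).symm
        rw [List.getD_eq_getElem w 0 (show b + len + n < w.length by omega),
          List.getD_eq_getElem w 0 (show b + n < w.length by omega)] at hh
        exact hh
    have e1 : (w.drop b).take (len + len) =
        (w.drop b).take len ++ (w.drop b).take len := by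
      rw [List.take_add, List.drop_drop, e3]
    have : (w.drop b).take len ++ (w.drop b).take len <:+: w := by
      rw [← e1]
      exact (List.take_prefix _ _).isInfix.trans (List.drop_suffix b w).isInfix
    exact this

private lemma square_of_period (k : ℕ) (w : List ℕ) (s m : ℕ) (hm : 1 ≤ m)
    (hb : ∀ j < m, s + j + m + k < (k + 1) * w.length)
    (h : ∀ j < m, w.getD ((s + j) / (k + 1)) 0 = w.getD ((s + j + m + k) / (k + 1)) 0) :
    ∃ u : List ℕ, u ≠ [] ∧ (u ++ u) <:+: w := by
  have hK : 0 < k + 1 := by omega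
  have hsr := Nat.div_add_mod s (k + 1)
  set b := s / (k + 1) with hbdef
  set r := s % (k + 1) with hrdef
  have hr : r < k + 1 := Nat.mod_lt _ hK
  have hdivlt : ∀ x, x < (k + 1) * w.length → x / (k + 1) < w.length := by
    intro x hx
    rw [Nat.div_lt_iff_lt_mul hK, Nat.mul_comm]
    exact hx
  by_cases hcross : ∃ j, j + 1 < m ∧ (s + j + 1) % (k + 1) = 0
  · obtain ⟨j, hj, hj0⟩ := hcross
    by_cases h2 : (s + (j + 1) + m + k) % (k + 1) = 0
    · -- boundary in both occurrences: (k+1) ∣ (m+k), long square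
      have hd1 : (k + 1) ∣ (s + j + 1) := Nat.dvd_of_mod_eq_zero hj0
      have hd2 : (k + 1) ∣ (s + (j + 1) + m + k) := Nat.dvd_of_mod_eq_zero h2
      have hdD : (k + 1) ∣ (m + k) := by
        have hsub := Nat.dvd_sub hd2 hd1
        rwa [show s + (j + 1) + m + k - (s + j + 1) = m + k by omega] at hsub
      obtain ⟨e, he⟩ := hdD
      match e, he with
      | 0, he => omega
      | 1, he => omega
      | (c + 2), he =>
        have hmul1 : (k + 1) * (c + 2) = (k + 1) * (c + 1) + (k + 1) := by
          rw [Nat.mul_add, Nat.mul_add]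
          omega
        have hmm : m = (k + 1) * (c + 1) + 1 := by omega
        have key : ∀ t < c + 1 + 1,
            w.getD (b + t) 0 = w.getD (b + (c + 1 + 1) + t) 0 ∧
              b + (c + 1 + 1) + t < w.length := by
          intro t ht
          rcases Nat.eq_zero_or_pos t with rfl | h1t
          · have hh := h 0 (by omega)
            have hb0 := hb 0 (by omega)
            have hx : s + 0 + m + k = (k + 1) * (b + (c + 2)) + r := by
              have h1 := Nat.mul_add (k + 1) b (c + 2)
              omega
            rw [hx] at hh hb0
            rw [mul_add_div_lt _ _ _ hK hr] at hh
            rw [show s + 0 = s by omega] at hh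
            have hlt := hdivlt _ hb0
            rw [mul_add_div_lt _ _ _ hK hr] at hlt
            constructor
            · rw [show b + (c + 1 + 1) + 0 = b + (c + 2) by omega,
                show b + 0 = b by omega]
              exact hh
            · omega
          · have hKt : k + 1 ≤ (k + 1) * t := Nat.le_mul_of_pos_right _ h1t
            have hKtc : (k + 1) * t ≤ (k + 1) * (c + 1) :=
              Nat.mul_le_mul_left _ (by omega)
            set j' := (k + 1) * t - r with hj'def
            have hj'm : j' < m := by omega
            have e1 : s + j' = (k + 1) * (b + t) := by
              have := Nat.mul_add (k + 1) b t
              omega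
            have e2 : s + j' + m + k = (k + 1) * (b + t + (c + 2)) := by
              have h1 := Nat.mul_add (k + 1) (b + t) (c + 2)
              omega
            have hh := h j' hj'm
            have hbj := hb j' hj'm
            rw [e2, e1] at hh
            rw [Nat.mul_div_cancel_left _ hK, Nat.mul_div_cancel_left _ hK] at hh
            constructor
            · rw [show b + (c + 1 + 1) + t = b + t + (c + 2) by omega]
              exact hh
            · have hlt := hdivlt _ hbj
              rw [e2, Nat.mul_div_cancel_left _ hK] at hlt
              omega
        have hbnd : b + 2 * (c + 1 + 1) ≤ w.length := by
          have := (key (c + 1) (by omega)).2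
          omega
        exact square_of_getD w b (c + 1 + 1) (by omega) hbnd (fun t ht => (key t ht).1)
    · -- boundary in occurrence 1 only: adjacent equal letters
      have hWj := h j (by omega)
      have hWj1 := h (j + 1) (by omega)
      have hbj1 := hb (j + 1) (by omega)
      have hstep1 : (s + j + 1) / (k + 1) = (s + j) / (k + 1) + 1 :=
        succ_div_of_mod_eq k (s + j) hj0
      have hstep2 : (s + (j + 1) + m + k) / (k + 1) = (s + j + m + k) / (k + 1) := by
        rw [show s + (j + 1) + m + k = s + j + m + k + 1 by omega]
        exact succ_div_of_mod_ne k (s + j + m + k)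
          (by rw [show s + j + m + k + 1 = s + (j + 1) + m + k by omega]; exact h2)
      rw [show s + (j + 1) = s + j + 1 by omega] at hWj1
      rw [hstep1] at hWj1
      rw [show s + j + 1 + m + k = s + (j + 1) + m + k by omega, hstep2] at hWj1
      have hBlt : (s + j) / (k + 1) + 1 + 1 ≤ w.length := by
        have h1 : (s + j + 1) / (k + 1) ≤ (s + (j + 1) + m + k) / (k + 1) :=
          Nat.div_le_div_right (by omega)
        have h2' := hdivlt _ hbj1
        omega
      refine square_of_getD w ((s + j) / (k + 1)) 1 (by omega) (by omega) ?_
      intro t ht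
      interval_cases t
      simp only [Nat.add_zero]
      rw [hWj, ← hWj1]
  · push_neg at hcross
    -- occurrence 1 inside a single block
    have hrm : r + m ≤ k + 1 := by
      by_contra hcon
      push_neg at hcon
      have hjm : (k - r) + 1 < m := by omega
      apply hcross (k - r) hjm
      have hx : s + (k - r) + 1 = (k + 1) * (b + 1) := by
        have h1 : (k + 1) * (b + 1) = (k + 1) * b + (k + 1) := by ring
        omega
      rw [hx]
      exact Nat.mul_mod_right _ _
    have hh := h 0 (by omega)
    have hb0 := hb 0 (by omega)
    have hx : s + 0 + m + k = (k + 1) * (b + 1) + (r + m - 1) := by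
      have h1 : (k + 1) * (b + 1) = (k + 1) * b + (k + 1) := by ring
      omega
    rw [hx] at hh hb0
    rw [mul_add_div_lt _ _ _ hK (by omega), show s + 0 = s by omega] at hh
    have hblt : b + 1 < w.length := by
      have := hdivlt _ hb0
      rwa [mul_add_div_lt _ _ _ hK (by omega)] at this
    refine square_of_getD w b 1 (by omega) (by omega) ?_
    intro t ht
    interval_cases t
    simpa using hh

end Aux

/-- For `k ≥ 1`, if `w ∈ {0,1,2}*` is square-free then `g(d_k(w))`
avoids `φ_{3k}` (equivalently, if `φ_{3k}` occurs in `g(d_k(w))` then `w` has a square). -/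
theorem gMorph_dMorph_avoids (k : ℕ) (hk : 1 ≤ k) (w : List ℕ) (hw : ∀ c ∈ w, c ≤ 2)
    (hsf : SquareFree w) : Avoids (3 * k) (gMorph (dMorph k w)) := by
  intro henc
  obtain ⟨X, Ys, hYslen, hXne, hYne, hinfix, hYrev⟩ := henc
  -- Step 1: every Yᵢ is a single letter
  have hY1 : ∀ Y ∈ Ys, Y.length = 1 := by
    intro Y hY
    match Y, hYne Y hY with
    | [], hne => exact absurd rfl hne
    | [a], _ => rfl
    | (a :: b :: Y'), _ =>
      exfalso
      have hYinf : (a :: b :: Y') <:+: gMorph (dMorph k w) := by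
        refine (mem_infix_flatten hY).trans (List.IsInfix.trans ?_ hinfix)
        exact ⟨X, X, rfl⟩
      have h1 : [a, b] <:+: gMorph (dMorph k w) := by
        have hpre : [a, b] <+: a :: b :: Y' := ⟨Y', rfl⟩
        exact hpre.isInfix.trans hYinf
      have h2 : [b, a] <:+: gMorph (dMorph k w) := by
        have hrev := hYrev _ hY
        have hr : (a :: b :: Y').reverse = Y'.reverse ++ [b, a] := by simp
        rw [hr] at hrev
        exact (List.suffix_append Y'.reverse [b, a]).isInfix.trans hrev
      rcases pair_classify k w hw a b h1 with h | h | h <;>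
        rcases pair_classify k w hw b a h2 with h' | h' | h' <;> omega
  have hZ : Ys.flatten.length = 3 * k := by
    rw [flatten_len_ones Ys hY1, hYslen]
  -- Step 2: extract the two aligned occurrences of X
  obtain ⟨p, hp, hX⟩ := infix_getD 0 hinfix
  set L := X.length with hLdef
  have hL1 : 1 ≤ L := List.length_pos_iff.mpr hXne
  have hlenXZX : (X ++ Ys.flatten ++ X).length = L + 3 * k + L := by
    simp only [List.length_append, hZ]
    try omega
  rw [hlenXZX, length_gMorph, length_dMorph] at hp
  simp only [List.append_assoc] at hX
  have keyEq : ∀ i < L,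
      (gMorph (dMorph k w)).getD (p + i) 0 =
        (gMorph (dMorph k w)).getD (p + (L + 3 * k) + i) 0 := by
    intro i hi
    have e1 := hX i (by simp only [List.length_append]; omega)
    rw [List.getD_append _ _ _ _ hi] at e1
    have e2 := hX (L + 3 * k + i) (by simp only [List.length_append]; omega)
    rw [List.getD_append_right _ _ _ _ (show X.length ≤ L + 3 * k + i by omega),
      show L + 3 * k + i - X.length = 3 * k + i by omega,
      List.getD_append_right _ _ _ _ (show Ys.flatten.length ≤ 3 * k + i by omega),
      show 3 * k + i - Ys.flatten.length = i by omega,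
      show p + (L + 3 * k + i) = p + (L + 3 * k) + i by omega] at e2
    exact e1.symm.trans e2
  -- Step 3: |X| is divisible by 3
  have hL3 : L % 3 = 0 := by
    have hEq := keyEq 0 (by omega)
    simp only [Nat.add_zero] at hEq
    rw [getD_gMorph _ _ (by rw [length_dMorph]; omega),
      getD_gMorph _ _ (by rw [length_dMorph]; omega)] at hEq
    have hv1 := le_two_getD_dMorph k w hw (p / 3)
    have hv2 := le_two_getD_dMorph k w hw ((p + (L + 3 * k)) / 3)
    split_ifs at hEq <;> omega
  obtain ⟨m, hmL⟩ : ∃ m, L = 3 * m := ⟨L / 3, by omega⟩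
  have hm1 : 1 ≤ m := by omega
  set q := (p + 2) / 3 with hqdef
  -- Step 4: transfer the repetition to w through g and d_k
  have Hw : ∀ j < m,
      w.getD ((q + j) / (k + 1)) 0 = w.getD ((q + j + m + k) / (k + 1)) 0 := by
    intro j hj
    have e := keyEq (3 * (q + j) - p) (by omega)
    rw [show p + (3 * (q + j) - p) = 3 * (q + j) by omega,
      show p + (L + 3 * k) + (3 * (q + j) - p) = 3 * (q + j + m + k) by omega] at e
    rw [getD_gMorph _ _ (by rw [length_dMorph]; omega),
      getD_gMorph _ _ (by rw [length_dMorph]; omega)] at e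
    rw [if_pos (show 3 * (q + j) % 3 = 0 by omega),
      if_pos (show 3 * (q + j + m + k) % 3 = 0 by omega),
      show 3 * (q + j) / 3 = q + j by omega,
      show 3 * (q + j + m + k) / 3 = q + j + m + k by omega] at e
    rw [getD_dMorph k w _ (by omega), getD_dMorph k w _ (by omega)] at e
    exact e
  have hbv : ∀ j < m, q + j + m + k < (k + 1) * w.length := by
    intro j hj
    omega
  -- Step 5: conclude a square in w
  obtain ⟨usq, hune, huinf⟩ := square_of_period k w q m hm1 hbv Hw
  exact hsf usq hune huinf
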